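/- Let k be an algebraically closed field and f = (f_1,...,f_m) ∈ k[t_1,...,t_n]^m almost surjective on k. Then for all p,q ∈ k[x_1,...,x_m], if p(f_1,...,f_m) divides q(f_1,...,f_m) in k[t_1,...,t_n], then p divides q in k[x_1,...,x_m]. -/

import Mathlib

open MvPolynomial

/-- `p` vanishes at every point of `A`. -/
def VanishesOn {k : Type*} [CommSemiring k] {m : ℕ} (A : Set (Fin m → k))
    (p : MvPolynomial (Fin m) k) : Prop :=
  ∀ a ∈ A, eval a p = 0

/-- The Zariski closure of `A ⊆ k^m` has dimension at most `d` (with `dim ∅ = -1`):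
for every index set `S` with more than `d` elements, the vanishing ideal of `A`
contains a nonzero polynomial supported on the variables in `S`. -/
def ZClosureDimLE {k : Type*} [CommSemiring k] {m : ℕ} (A : Set (Fin m → k)) (d : ℤ) : Prop :=
  ∀ S : Finset (Fin m), d < (S.card : ℤ) →
    ∃ p : MvPolynomial (Fin m) k, p ≠ 0 ∧
      p ∈ MvPolynomial.supported k (↑S : Set (Fin m)) ∧ VanishesOn A p

/-- The range of the polynomial map `k^n → k^m` induced by `f`. -/
def polyRange {k : Type*} [CommSemiring k] {m n : ℕ}
    (f : Fin m → MvPolynomial (Fin n) k) : Set (Fin m → k) :=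
  Set.range fun a : Fin n → k => fun i => eval a (f i)

/-- `f` is almost surjective on `k`: the Zariski closure of the complement of the range
of the induced map `k^n → k^m` has dimension at most `m - 2`. -/
def AlmostSurj {k : Type*} [CommSemiring k] {m n : ℕ}
    (f : Fin m → MvPolynomial (Fin n) k) : Prop :=
  ZClosureDimLE (polyRange f)ᶜ ((m : ℤ) - 2)

/-- `g` is determined by `f`. -/
def Determined {k : Type*} [CommSemiring k] {m n : ℕ}
    (f : Fin m → MvPolynomial (Fin n) k) (g : MvPolynomial (Fin n) k) : Prop :=
  ∀ a b : Fin n → k, (∀ i, eval a (f i) = eval b (f i)) → eval a g = eval b g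

private lemma eval_aeval'' {k : Type*} [CommSemiring k] {m n : ℕ}
    (a : Fin n → k) (f : Fin m → MvPolynomial (Fin n) k) (p : MvPolynomial (Fin m) k) :
    eval a (aeval f p) = eval (fun i => eval a (f i)) p := by
  induction p using MvPolynomial.induction_on with
  | C c => simp
  | add p q hp hq => simp only [map_add, hp, hq]
  | mul_X p i hp => simp only [map_mul, aeval_X, eval_X, hp]

private lemma deg0_le' {k : Type*} [Field k] {m : ℕ} {r s : MvPolynomial (Fin (m + 1)) k}
    (hr : r ≠ 0) (hs : s ≠ 0) : degreeOf 0 r ≤ degreeOf 0 (r * s) := by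
  have hr' : finSuccEquiv k m r ≠ 0 := by
    simpa using (map_ne_zero_iff _ (finSuccEquiv k m).injective).mpr hr
  have hs' : finSuccEquiv k m s ≠ 0 := by
    simpa using (map_ne_zero_iff _ (finSuccEquiv k m).injective).mpr hs
  rw [← natDegree_finSuccEquiv, ← natDegree_finSuccEquiv, map_mul,
    Polynomial.natDegree_mul hr' hs']
  exact Nat.le_add_right _ _

private lemma degreeOf_le_of_dvd' {k : Type*} [Field k] {m : ℕ} {i : Fin m}
    {r g : MvPolynomial (Fin m) k} (hg : g ≠ 0) (hdvd : r ∣ g) :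
    degreeOf i r ≤ degreeOf i g := by
  obtain ⟨s, rfl⟩ := hdvd
  rcases eq_or_ne r 0 with rfl | hr
  · simp
  have hs : s ≠ 0 := right_ne_zero_of_mul hg
  obtain ⟨m', rfl⟩ : ∃ m', m = m' + 1 := ⟨m - 1, by have := i.pos; omega⟩
  have key : ∀ p : MvPolynomial (Fin (m' + 1)) k,
      degreeOf i p = degreeOf 0 (rename (Equiv.swap i 0) p) := by
    intro p
    have h2 := degreeOf_rename_of_injective (p := p) (Equiv.swap i 0).injective i
    rw [Equiv.swap_apply_left] at h2
    exact h2.symm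
  rw [key, key, map_mul]
  refine deg0_le' ?_ ?_
  · exact fun hz => hr (rename_injective _ (Equiv.swap i 0).injective (by simpa using hz))
  · exact fun hz => hs (rename_injective _ (Equiv.swap i 0).injective (by simpa using hz))

private lemma aeval_inj' {k : Type*} [Field k] [IsAlgClosed k] {m n : ℕ}
    {f : Fin m → MvPolynomial (Fin n) k} (h : AlmostSurj f)
    {p : MvPolynomial (Fin m) k} (hp : aeval f p = 0) : p = 0 := by
  obtain ⟨g, hg0, -, hgv⟩ := h Finset.univ
    (by rw [Finset.card_univ, Fintype.card_fin]; omega)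
  have hz : p * g = 0 := by
    apply MvPolynomial.funext
    intro x
    rw [map_mul, map_zero]
    by_cases hx : x ∈ polyRange f
    · obtain ⟨a, rfl⟩ := hx
      have : eval (fun i => eval a (f i)) p = 0 := by
        rw [← eval_aeval'', hp, map_zero]
      rw [this, zero_mul]
    · rw [hgv x hx, mul_zero]
  rcases mul_eq_zero.mp hz with h1 | h1
  · exact h1
  · exact absurd h1 hg0

private lemma prime_dvd' {k : Type*} [Field k] [IsAlgClosed k] {m n : ℕ}
    {f : Fin m → MvPolynomial (Fin n) k} (h : AlmostSurj f)
    {r q : MvPolynomial (Fin m) k} (hr : Prime r)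
    (hdvd : aeval f r ∣ aeval f q) : r ∣ q := by
  -- r has a variable
  have hvars : r.vars.Nonempty := by
    rw [Finset.nonempty_iff_ne_empty]
    intro hv
    have hmem : r ∈ supported k (∅ : Set (Fin m)) := by
      rw [mem_supported, hv]; simp
    rw [supported_empty, Algebra.mem_bot] at hmem
    obtain ⟨a, rfl⟩ := hmem
    have ha : a ≠ 0 := fun h0 => hr.ne_zero (by simp [h0, Algebra.algebraMap_self_apply])
    exact hr.not_isUnit ((isUnit_iff_ne_zero.mpr ha).map (algebraMap k _))
  obtain ⟨i, hi⟩ := hvars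
  have hm : 1 ≤ m := i.pos
  obtain ⟨g, hg0, hgsupp, hgv⟩ := h (Finset.univ.erase i)
    (by rw [Finset.card_erase_of_mem (Finset.mem_univ i), Finset.card_univ, Fintype.card_fin]
        omega)
  -- degreeOf i g = 0
  have hdegg : degreeOf i g = 0 := by
    rw [mem_supported] at hgsupp
    by_contra hne
    have : i ∈ g.vars := by
      rw [degreeOf_eq_sup] at hne
      obtain ⟨d, hd, hdi⟩ : ∃ d ∈ g.support, d i ≠ 0 := by
        by_contra hc
        push_neg at hc
        exact hne (Nat.le_zero.mp (Finset.sup_le fun d hd => Nat.le_zero.mpr (hc d hd)))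
      exact (mem_vars i).mpr ⟨d, hd, Finsupp.mem_support_iff.mpr hdi⟩
    have := hgsupp this
    simp at this
  -- degreeOf i r ≠ 0
  have hdegr : degreeOf i r ≠ 0 := by
    obtain ⟨d, hd, hdi⟩ := (mem_vars i).mp hi
    have := monomial_le_degreeOf i hd
    have := Finsupp.mem_support_iff.mp hdi
    omega
  have hrng : ¬ r ∣ g := fun hdg => hdegr (Nat.le_zero.mp (hdegg ▸ degreeOf_le_of_dvd' hg0 hdg))
  -- Nullstellensatz
  have hprime : (Ideal.span {r} : Ideal (MvPolynomial (Fin m) k)).IsPrime :=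
    (Ideal.span_singleton_prime hr.ne_zero).mpr hr
  have hqg : q * g ∈ Ideal.span {r} := by
    rw [← hprime.radical, ← MvPolynomial.vanishingIdeal_zeroLocus_eq_radical (K := k),
      MvPolynomial.mem_vanishingIdeal_iff]
    intro x hx
    have hrx : eval x r = 0 :=
      (MvPolynomial.mem_zeroLocus_iff.mp hx) r (Ideal.subset_span rfl)
    show eval x (q * g) = 0
    rw [map_mul]
    by_cases hmem : x ∈ polyRange f
    · obtain ⟨a, rfl⟩ := hmem
      obtain ⟨c, hc⟩ := hdvd
      have : eval (fun i => eval a (f i)) q = eval (fun i => eval a (f i)) r * eval a c := by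
        rw [← eval_aeval'', hc, map_mul, eval_aeval'']
      rw [this, hrx, zero_mul, zero_mul]
    · rw [hgv x hmem, mul_zero]
  rw [Ideal.mem_span_singleton] at hqg
  exact (hr.dvd_or_dvd hqg).resolve_right hrng

theorem stmt7 {k : Type*} [Field k] [IsAlgClosed k] {m n : ℕ}
    (f : Fin m → MvPolynomial (Fin n) k) (h : AlmostSurj f)
    (p q : MvPolynomial (Fin m) k) (hdvd : aeval f p ∣ aeval f q) :
    p ∣ q := by
  have key : ∀ p q : MvPolynomial (Fin m) k, aeval f p ∣ aeval f q → p ∣ q := by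
    intro p
    refine UniqueFactorizationMonoid.induction_on_prime p ?_ ?_ ?_
    · intro q hd
      rw [map_zero, zero_dvd_iff] at hd
      rw [aeval_inj' h hd]
    · intro x hx q _
      exact hx.dvd
    · intro a r ha hrp ih q hd
      have h1 : r ∣ q :=
        prime_dvd' h hrp (dvd_trans ⟨aeval f a, by rw [← map_mul]⟩ hd)
      obtain ⟨q', rfl⟩ := h1
      have hrne : aeval f r ≠ 0 := fun hz => hrp.ne_zero (aeval_inj' h hz)
      obtain ⟨c, hc⟩ := hd
      rw [map_mul, map_mul] at hc
      have h2 : aeval f a ∣ aeval f q' :=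
        ⟨c, mul_left_cancel₀ hrne (by rw [hc, mul_assoc])⟩
      exact mul_dvd_mul_left r (ih q' h2)
  exact key p q hdvd
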